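/- The integral ∫₀¹ (1 - e^{-p} - e^{-1/p})/p dp equals the Euler–Mascheroni constant γ. -/

import Mathlib

open MeasureTheory Set Real Filter Topology

lemma key1 : ∫ t in Ioi (0:ℝ), Real.log t * Real.exp (-t) = -Real.eulerMascheroniConstant := by
  have hd := Complex.hasDerivAt_GammaIntegral (s := 1) (by simp)
  have heq : Complex.Gamma =ᶠ[𝓝 (1:ℂ)] Complex.GammaIntegral := by
    have hmem : {s : ℂ | 0 < s.re} ∈ 𝓝 (1:ℂ) := by
      refine (isOpen_lt continuous_const Complex.continuous_re).mem_nhds ?_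
      simp
    filter_upwards [hmem] with s hs using Complex.Gamma_eq_integral hs
  have hd' := hd.congr_of_eventuallyEq heq
  have huniq := hd'.unique Complex.hasDerivAt_Gamma_one
  simp only [sub_self, Complex.cpow_zero, one_mul, ← Complex.ofReal_mul] at huniq
  have h2 := (integral_ofReal (𝕜 := ℂ) (f := fun t => Real.log t * Real.exp (-t))
    (μ := volume.restrict (Ioi 0))).symm.trans huniq
  rw [← Complex.ofReal_neg] at h2
  exact Complex.ofReal_inj.mp h2

lemma helper_tendsto {f : ℝ → ℝ} (hf : IntegrableOn f (Ioc (0:ℝ) 1)) :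
    Tendsto (fun ε : ℝ => ∫ t in ε..1, f t) (𝓝[>] (0:ℝ))
      (𝓝 (∫ t in Ioc (0:ℝ) 1, f t)) := by
  have hIcc : IntegrableOn f (Icc (0:ℝ) 1) := by
    rwa [integrableOn_Icc_iff_integrableOn_Ioc]
  have hcont := intervalIntegral.continuousOn_primitive (a := 0) (b := 1) (μ := volume) hIcc
  have h0 : Tendsto (fun x => ∫ t in Ioc (0:ℝ) x, f t) (𝓝[Icc 0 1] 0) (𝓝 0) := by
    have := hcont 0 (by constructor <;> norm_num)
    simpa [ContinuousWithinAt, Ioc_self] using this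
  have h0' : Tendsto (fun x => ∫ t in Ioc (0:ℝ) x, f t) (𝓝[>] 0) (𝓝 0) := by
    rw [← nhdsWithin_Ioc_eq_nhdsGT (zero_lt_one (α := ℝ))]
    exact h0.mono_left (nhdsWithin_mono _ Ioc_subset_Icc_self)
  have key : Tendsto (fun ε : ℝ => (∫ t in Ioc (0:ℝ) 1, f t) - ∫ t in Ioc (0:ℝ) ε, f t)
      (𝓝[>] (0:ℝ)) (𝓝 (∫ t in Ioc (0:ℝ) 1, f t)) := by
    simpa using tendsto_const_nhds.sub h0'
  refine key.congr' ?_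
  filter_upwards [Ioo_mem_nhdsGT_of_mem (by norm_num : (0:ℝ) ∈ Ico (0:ℝ) 1)] with ε hε
  have h1 : IntervalIntegrable f volume 0 ε := by
    rw [intervalIntegrable_iff_integrableOn_Ioc_of_le hε.1.le]
    exact hf.mono_set (Ioc_subset_Ioc le_rfl hε.2.le)
  have h2 : IntervalIntegrable f volume ε 1 := by
    rw [intervalIntegrable_iff_integrableOn_Ioc_of_le hε.2.le]
    exact hf.mono_set (Ioc_subset_Ioc hε.1.le le_rfl)
  have hadd := intervalIntegral.integral_add_adjacent_intervals h1 h2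
  rw [← intervalIntegral.integral_of_le (zero_le_one (α := ℝ)),
    ← intervalIntegral.integral_of_le hε.1.le, ← hadd]
  ring

lemma intA : IntegrableOn (fun t => Real.log t * Real.exp (-t)) (Ioc (0:ℝ) 1) := by
  have hmeas : AEStronglyMeasurable (fun t => Real.log t * Real.exp (-t))
      (volume.restrict (Ioc (0:ℝ) 1)) := by
    apply ContinuousOn.aestronglyMeasurable _ measurableSet_Ioc
    exact (Real.continuousOn_log.mono (fun x hx => by simp [ne_of_gt hx.1])).mul
      (Real.continuous_exp.comp continuous_neg).continuousOn
  have hdom : IntegrableOn (fun t : ℝ => 2 * t ^ (-(1/2) : ℝ)) (Ioc (0:ℝ) 1) := by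
    have := (intervalIntegral.intervalIntegrable_rpow' (a := 0) (b := 1)
      (r := (-(1/2) : ℝ)) (by norm_num))
    rw [intervalIntegrable_iff_integrableOn_Ioc_of_le zero_le_one] at this
    exact this.const_mul 2
  refine hdom.integrable.mono' hmeas ?_
  rw [ae_restrict_iff' measurableSet_Ioc]
  filter_upwards with t ht
  have ht0 : 0 < t := ht.1
  have hrp : 0 < t ^ (-(1/2) : ℝ) := Real.rpow_pos_of_pos ht0 _
  have h1 : |Real.log t| ≤ 2 * t ^ (-(1/2) : ℝ) := by
    rw [abs_of_nonpos (Real.log_nonpos ht0.le ht.2)]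
    have h2 : Real.log (t ^ (-(1/2) : ℝ)) ≤ t ^ (-(1/2) : ℝ) :=
      (Real.log_le_sub_one_of_pos hrp).trans (by linarith)
    rw [Real.log_rpow ht0] at h2
    nlinarith
  have h3 : ‖Real.log t * Real.exp (-t)‖ ≤ |Real.log t| := by
    rw [norm_mul, Real.norm_eq_abs, Real.norm_eq_abs, abs_of_pos (Real.exp_pos _)]
    nlinarith [Real.exp_le_one_iff.mpr (neg_nonpos.mpr ht0.le), Real.exp_pos (-t),
      abs_nonneg (Real.log t)]
  exact h3.trans h1

lemma intB : IntegrableOn (fun t => Real.log t * Real.exp (-t)) (Ioi (1:ℝ)) := by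
  have hmeas : AEStronglyMeasurable (fun t => Real.log t * Real.exp (-t))
      (volume.restrict (Ioi (1:ℝ))) := by
    apply ContinuousOn.aestronglyMeasurable _ measurableSet_Ioi
    exact (Real.continuousOn_log.mono (fun x hx => by
      simp [ne_of_gt (lt_trans zero_lt_one (mem_Ioi.mp hx))])).mul
      (Real.continuous_exp.comp continuous_neg).continuousOn
  have hdom : IntegrableOn (fun t : ℝ => Real.exp (-t) * t ^ ((2:ℝ) - 1)) (Ioi (1:ℝ)) :=
    (Real.GammaIntegral_convergent (by norm_num : (0:ℝ) < 2)).mono_set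
      (Ioi_subset_Ioi zero_le_one)
  refine hdom.integrable.mono' hmeas ?_
  rw [ae_restrict_iff' measurableSet_Ioi]
  filter_upwards with t ht
  have ht1 : (1:ℝ) < t := ht
  have ht0 : (0:ℝ) < t := lt_trans zero_lt_one ht1
  have hlog : 0 ≤ Real.log t := Real.log_nonneg ht1.le
  have hloglt : Real.log t ≤ t := (Real.log_le_sub_one_of_pos ht0).trans (by linarith)
  rw [norm_mul, Real.norm_eq_abs, Real.norm_eq_abs, abs_of_nonneg hlog,
    abs_of_pos (Real.exp_pos _), show ((2:ℝ) - 1) = 1 by norm_num, Real.rpow_one]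
  nlinarith [Real.exp_pos (-t)]

lemma intC : IntegrableOn (fun t => Real.exp (-t) / t) (Ioi (1:ℝ)) := by
  have hmeas : AEStronglyMeasurable (fun t => Real.exp (-t) / t)
      (volume.restrict (Ioi (1:ℝ))) := by
    apply ContinuousOn.aestronglyMeasurable _ measurableSet_Ioi
    exact (Real.continuous_exp.comp continuous_neg).continuousOn.div
      continuousOn_id (fun x hx => ne_of_gt (lt_trans zero_lt_one hx))
  have hdom : IntegrableOn (fun t : ℝ => Real.exp (-1 * t)) (Ioi (1:ℝ)) :=
    exp_neg_integrableOn_Ioi 1 zero_lt_one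
  refine hdom.integrable.mono' hmeas ?_
  rw [ae_restrict_iff' measurableSet_Ioi]
  filter_upwards with t ht
  have ht1 : (1:ℝ) < t := ht
  rw [norm_div, Real.norm_eq_abs, Real.norm_eq_abs, abs_of_pos (Real.exp_pos _),
    abs_of_pos (lt_trans zero_lt_one ht1), neg_one_mul]
  rw [div_le_iff₀ (lt_trans zero_lt_one ht1)]
  nlinarith [Real.exp_pos (-t)]

lemma intD : IntegrableOn (fun p => (1 - Real.exp (-p)) / p) (Ioc (0:ℝ) 1) := by
  have hmeas : AEStronglyMeasurable (fun p => (1 - Real.exp (-p)) / p)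
      (volume.restrict (Ioc (0:ℝ) 1)) := by
    apply ContinuousOn.aestronglyMeasurable _ measurableSet_Ioc
    exact (continuousOn_const.sub (Real.continuous_exp.comp continuous_neg).continuousOn).div
      continuousOn_id (fun x hx => ne_of_gt hx.1)
  have hconst : IntegrableOn (fun _ : ℝ => (1:ℝ)) (Ioc (0:ℝ) 1) :=
    (integrableOn_const_iff).mpr (Or.inr measure_Ioc_lt_top)
  refine hconst.integrable.mono' hmeas ?_
  rw [ae_restrict_iff' measurableSet_Ioc]
  filter_upwards with p hp
  have hp0 : 0 < p := hp.1
  have h1 : Real.exp (-p) ≤ 1 := Real.exp_le_one_iff.mpr (neg_nonpos.mpr hp0.le)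
  have h2 : 1 - p ≤ Real.exp (-p) := by
    have := Real.add_one_le_exp (-p); linarith
  rw [Real.norm_eq_abs, abs_div, abs_of_nonneg (by linarith : (0:ℝ) ≤ 1 - Real.exp (-p)),
    abs_of_pos hp0, div_le_one hp0]
  linarith

lemma intE : IntegrableOn (fun p => Real.exp (-1/p) / p) (Ioc (0:ℝ) 1) := by
  have hmeas : AEStronglyMeasurable (fun p => Real.exp (-1/p) / p)
      (volume.restrict (Ioc (0:ℝ) 1)) := by
    apply ContinuousOn.aestronglyMeasurable _ measurableSet_Ioc
    exact ((Real.continuous_exp.comp_continuousOn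
      ((continuousOn_const (c := (-1:ℝ))).div continuousOn_id
        (fun x hx => ne_of_gt hx.1)))).div continuousOn_id (fun x hx => ne_of_gt hx.1)
  have hconst : IntegrableOn (fun _ : ℝ => (1:ℝ)) (Ioc (0:ℝ) 1) :=
    (integrableOn_const_iff).mpr (Or.inr measure_Ioc_lt_top)
  refine hconst.integrable.mono' hmeas ?_
  rw [ae_restrict_iff' measurableSet_Ioc]
  filter_upwards with p hp
  have hp0 : 0 < p := hp.1
  have hinv : (0:ℝ) < 1/p := by positivity
  have h1 : 1/p ≤ Real.exp (1/p) := by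
    have := Real.add_one_le_exp (1/p); linarith
  have h2 : Real.exp (-1/p) ≤ p := by
    rw [neg_div, Real.exp_neg]
    rw [inv_le_comm₀ (Real.exp_pos _) hp0]
    calc p⁻¹ = 1/p := (one_div p).symm
      _ ≤ Real.exp (1/p) := h1
  rw [Real.norm_eq_abs, abs_div, abs_of_pos (Real.exp_pos _), abs_of_pos hp0, div_le_one hp0]
  exact h2

lemma step1 : ∫ t in Ioc (0:ℝ) 1,
    (Real.log t * Real.exp (-t) + (1 - Real.exp (-t)) / t) = 0 := by
  set f : ℝ → ℝ := fun t => Real.log t * Real.exp (-t) + (1 - Real.exp (-t)) / t with hf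
  have hint : IntegrableOn f (Ioc (0:ℝ) 1) := intA.add intD
  have t1 := helper_tendsto hint
  have t2 : Tendsto (fun ε : ℝ => ∫ t in ε..1, f t) (𝓝[>] (0:ℝ)) (𝓝 0) := by
    have hml : Tendsto (fun ε : ℝ => ‖ε * Real.log ε‖) (𝓝[>] (0:ℝ)) (𝓝 0) := by
      have := (Real.continuous_mul_log.tendsto 0).norm
      simp only [zero_mul, norm_zero] at this
      exact this.mono_left nhdsWithin_le_nhds
    apply squeeze_zero_norm' _ hml
    filter_upwards [Ioo_mem_nhdsGT_of_mem (by norm_num : (0:ℝ) ∈ Ico (0:ℝ) 1)] with ε hε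
    have hε0 : 0 < ε := hε.1
    -- FTC on [ε, 1]
    have hderiv : ∀ t ∈ uIcc ε (1:ℝ),
        HasDerivAt (fun t => (1 - Real.exp (-t)) * Real.log t) (f t) t := by
      intro t ht
      rw [uIcc_of_le hε.2.le] at ht
      have ht0 : 0 < t := lt_of_lt_of_le hε0 ht.1
      have h1 := ((hasDerivAt_neg t).exp.const_sub 1).mul (Real.hasDerivAt_log ht0.ne')
      have heq : -(Real.exp (-t) * -1) * Real.log t + (1 - Real.exp (-t)) * t⁻¹ = f t := by
        rw [hf]
        field_simp [ht0.ne']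
      exact heq ▸ h1
    have hcontf : ContinuousOn f (uIcc ε (1:ℝ)) := by
      rw [uIcc_of_le hε.2.le]
      have hpos : ∀ x ∈ Icc ε (1:ℝ), x ≠ 0 := fun x hx => (lt_of_lt_of_le hε0 hx.1).ne'
      refine ContinuousOn.add ?_ ?_
      · exact (Real.continuousOn_log.mono (fun x hx => hpos x hx)).mul
          (Real.continuous_exp.comp continuous_neg).continuousOn
      · exact (continuousOn_const.sub
          (Real.continuous_exp.comp continuous_neg).continuousOn).div continuousOn_id hpos
    have hftc := intervalIntegral.integral_eq_sub_of_hasDerivAt hderiv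
      (hcontf.intervalIntegrable)
    rw [hftc]
    simp only [Real.log_one, mul_zero, zero_sub, norm_neg]
    have h1 : Real.exp (-ε) ≤ 1 := Real.exp_le_one_iff.mpr (neg_nonpos.mpr hε0.le)
    have h2 : 1 - ε ≤ Real.exp (-ε) := by have := Real.add_one_le_exp (-ε); linarith
    simp only [norm_mul, Real.norm_eq_abs]
    have hb : |1 - Real.exp (-ε)| ≤ |ε| := by
      rw [abs_of_nonneg (by linarith : (0:ℝ) ≤ 1 - Real.exp (-ε)), abs_of_pos hε0]
      linarith
    exact mul_le_mul_of_nonneg_right hb (abs_nonneg _)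
  exact tendsto_nhds_unique t1 t2

lemma step2 : ∫ t in Ioi (1:ℝ),
    (Real.log t * Real.exp (-t) - Real.exp (-t) / t) = 0 := by
  have h := integral_Ioi_of_hasDerivAt_of_tendsto (a := (1:ℝ)) (m := 0)
    (f := fun t => -(Real.exp (-t) * Real.log t))
    (f' := fun t => Real.log t * Real.exp (-t) - Real.exp (-t) / t)
    ?_ ?_ ?_ ?_
  · rw [h]; simp
  · have : ContinuousOn (fun t : ℝ => -(Real.exp (-t) * Real.log t)) (Ici (1:ℝ)) := by
      refine ContinuousOn.neg ?_
      exact (Real.continuous_exp.comp continuous_neg).continuousOn.mul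
        (Real.continuousOn_log.mono (fun x hx => (lt_of_lt_of_le zero_lt_one hx).ne'))
    exact this 1 self_mem_Ici
  · intro x hx
    have hx0 : 0 < x := lt_trans zero_lt_one hx
    have h1 := (((hasDerivAt_neg x).exp).mul (Real.hasDerivAt_log hx0.ne')).neg
    convert h1 using 1
    · rfl
    field_simp
    ring
  · exact intB.sub intC
  · have hb : Tendsto (fun t : ℝ => t ^ (1:ℕ) * Real.exp (-t)) atTop (𝓝 0) :=
      Real.tendsto_pow_mul_exp_neg_atTop_nhds_zero 1
    apply squeeze_zero_norm' _ hb
    filter_upwards [Ici_mem_atTop (1:ℝ)] with t ht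
    have ht0 : 0 < t := lt_of_lt_of_le zero_lt_one ht
    have hlog : 0 ≤ Real.log t := Real.log_nonneg ht
    have hloglt : Real.log t ≤ t := (Real.log_le_sub_one_of_pos ht0).trans (by linarith)
    rw [norm_neg, norm_mul, Real.norm_eq_abs, Real.norm_eq_abs,
      abs_of_pos (Real.exp_pos _), abs_of_nonneg hlog, pow_one]
    nlinarith [Real.exp_pos (-t)]

lemma step3 : ∫ p in Ioc (0:ℝ) 1, Real.exp (-1/p) / p
    = ∫ t in Ioi (1:ℝ), Real.exp (-t) / t := by
  have t1 := helper_tendsto intE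
  have t2 : Tendsto (fun ε : ℝ => ∫ t in (1:ℝ)..ε⁻¹, Real.exp (-t) / t) (𝓝[>] (0:ℝ))
      (𝓝 (∫ t in Ioi (1:ℝ), Real.exp (-t) / t)) :=
    intervalIntegral_tendsto_integral_Ioi 1 intC tendsto_inv_nhdsGT_zero
  refine tendsto_nhds_unique t1 (t2.congr' ?_)
  filter_upwards [Ioo_mem_nhdsGT_of_mem (by norm_num : (0:ℝ) ∈ Ico (0:ℝ) 1)] with ε hε
  have hε0 : 0 < ε := hε.1
  have hsub := intervalIntegral.integral_comp_smul_deriv'' (a := ε) (b := 1)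
    (f := fun x => x⁻¹) (f' := fun x => -(x^2)⁻¹) (g := fun t => Real.exp (-t) / t)
    ?_ ?_ ?_ ?_
  · -- hsub : ∫ x in ε..1, (-(x^2)⁻¹) • (g ∘ f) x = ∫ u in ε⁻¹..1⁻¹, g u
    have hL : ∫ x in ε..1, (-(x^2)⁻¹) • ((fun t => Real.exp (-t) / t) ∘ (fun x => x⁻¹)) x
        = -∫ x in ε..1, Real.exp (-1/x) / x := by
      rw [← intervalIntegral.integral_neg]
      apply intervalIntegral.integral_congr
      intro x hx
      rw [uIcc_of_le hε.2.le] at hx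
      have hx0 : 0 < x := lt_of_lt_of_le hε0 hx.1
      simp only [Function.comp_apply, smul_eq_mul]
      rw [neg_div, one_div]
      field_simp
    rw [hL, inv_one] at hsub
    rw [← neg_neg (∫ t in (1:ℝ)..ε⁻¹, Real.exp (-t) / t), ← intervalIntegral.integral_symm,
      ← hsub, neg_neg]
  · rw [uIcc_of_le hε.2.le]
    exact continuousOn_inv₀.mono (fun x hx => (lt_of_lt_of_le hε0 hx.1).ne')
  · intro x hx
    rw [min_eq_left hε.2.le, max_eq_right hε.2.le] at hx
    have hx0 : 0 < x := lt_trans hε0 hx.1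
    exact (hasDerivAt_inv hx0.ne').hasDerivWithinAt
  · rw [uIcc_of_le hε.2.le]
    refine (((continuous_pow 2).continuousOn).inv₀ ?_).neg
    intro x hx
    have hx0 : 0 < x := lt_of_lt_of_le hε0 hx.1
    positivity
  · rw [uIcc_of_le hε.2.le]
    refine ContinuousOn.div ?_ continuousOn_id ?_
    · exact Real.continuous_exp.comp_continuousOn continuous_neg.continuousOn
    · rintro y ⟨x, hx, rfl⟩
      have hx0 : 0 < x := lt_of_lt_of_le hε0 hx.1
      positivity


theorem stmt_1 :
    ∫ p in (0:ℝ)..1, (1 - Real.exp (-p) - Real.exp (-1/p)) / p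
      = Real.eulerMascheroniConstant := by
  have hsplit : (∫ t in Ioc (0:ℝ) 1, Real.log t * Real.exp (-t))
      + (∫ t in Ioi (1:ℝ), Real.log t * Real.exp (-t))
      = -Real.eulerMascheroniConstant := by
    rw [← key1, ← Ioc_union_Ioi_eq_Ioi (zero_le_one (α := ℝ))]
    exact (setIntegral_union (Ioc_disjoint_Ioi le_rfl) measurableSet_Ioi intA intB).symm
  have h1 : (∫ t in Ioc (0:ℝ) 1, Real.log t * Real.exp (-t))
      = - ∫ t in Ioc (0:ℝ) 1, (1 - Real.exp (-t)) / t := by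
    have := step1
    rw [integral_add intA intD] at this
    linarith
  have h2 : (∫ t in Ioi (1:ℝ), Real.log t * Real.exp (-t))
      = ∫ t in Ioi (1:ℝ), Real.exp (-t) / t := by
    have := step2
    rw [integral_sub intB intC] at this
    linarith
  rw [intervalIntegral.integral_of_le (zero_le_one (α := ℝ))]
  have hfun : (fun p : ℝ => (1 - Real.exp (-p) - Real.exp (-1/p)) / p)
      = fun p => (1 - Real.exp (-p)) / p - Real.exp (-1/p) / p := by
    funext p
    rw [sub_div]
  rw [hfun, integral_sub intD intE, step3]
  rw [h1, h2] at hsplit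
  linarith
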